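/- If t is a real number with t ≠ 0 that is not an eigenvalue of B' (i.e., det(B' − tI) ≠ 0), then det(B − tI) / det(B' − tI) = t^{2d} · det(I + (1/t²)(B' − tI)^{-1} X), where B is the NB-matrix of G, B' is its block indexed by directed edges not incident to a node c of degree d, and X = DFE. -/

import Mathlib

open Matrix

/-- The non-backtracking matrix of a simple graph `G`: rows and columns are indexed by
darts (directed edges); entry `(k→l, i→j)` is `δ_{jk} (1 - δ_{il})`. -/
def nbMatrix {V : Type*} [DecidableEq V] (G : SimpleGraph V) :
    Matrix G.Dart G.Dart ℝ := fun r c =>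
  (if c.toProd.2 = r.toProd.1 then (1 : ℝ) else 0) *
  (if c.toProd.1 = r.toProd.2 then 0 else 1)

/-- Darts (directed edges) not incident to the node `c`. -/
abbrev NonIncDart {V : Type*} (G : SimpleGraph V) (c : V) :=
  {e : G.Dart // e.toProd.1 ≠ c ∧ e.toProd.2 ≠ c}

/-- Darts (directed edges) incident to the node `c`. -/
abbrev IncDart {V : Type*} (G : SimpleGraph V) (c : V) :=
  {e : G.Dart // e.toProd.1 = c ∨ e.toProd.2 = c}

/-- The block `B'` of the NB-matrix: rows and columns indexed by darts not incident to `c`. -/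
def blockB' {V : Type*} [DecidableEq V] (G : SimpleGraph V) (c : V) :
    Matrix (NonIncDart G c) (NonIncDart G c) ℝ := fun r s => nbMatrix G r.val s.val

/-- The block `D`: rows indexed by darts not incident to `c`, columns by darts incident to `c`. -/
def blockD {V : Type*} [DecidableEq V] (G : SimpleGraph V) (c : V) :
    Matrix (NonIncDart G c) (IncDart G c) ℝ := fun r s => nbMatrix G r.val s.val

/-- The block `E`: rows indexed by darts incident to `c`, columns by darts not incident to `c`. -/
def blockE {V : Type*} [DecidableEq V] (G : SimpleGraph V) (c : V) :
    Matrix (IncDart G c) (NonIncDart G c) ℝ := fun r s => nbMatrix G r.val s.val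

/-- The block `F`: rows and columns indexed by darts incident to `c`. -/
def blockF {V : Type*} [DecidableEq V] (G : SimpleGraph V) (c : V) :
    Matrix (IncDart G c) (IncDart G c) ℝ := fun r s => nbMatrix G r.val s.val

/-- The matrix `X = D F E`, indexed by darts not incident to `c`. -/
def blockX {V : Type*} [Fintype V] [DecidableEq V] (G : SimpleGraph V) [DecidableRel G.Adj]
    (c : V) : Matrix (NonIncDart G c) (NonIncDart G c) ℝ :=
  blockD G c * blockF G c * blockE G c

section Aux

variable {V : Type*} [Fintype V] [DecidableEq V] (G : SimpleGraph V) [DecidableRel G.Adj] (c : V)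

/-- The equivalence splitting darts into those not incident and those incident to `c`. -/
def dartEquiv : NonIncDart G c ⊕ IncDart G c ≃ G.Dart where
  toFun := Sum.elim Subtype.val Subtype.val
  invFun d :=
    if h : d.toProd.1 = c ∨ d.toProd.2 = c then Sum.inr ⟨d, h⟩ else Sum.inl ⟨d, not_or.mp h⟩
  left_inv := by
    rintro (⟨d, h⟩ | ⟨d, h⟩) <;> dsimp only [Sum.elim_inl, Sum.elim_inr]
    · rw [dif_neg (not_or.mpr ⟨h.1, h.2⟩)]
    · rw [dif_pos h]
  right_inv := by
    intro d
    dsimp only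
    split <;> rfl

lemma blockD_mul_blockE : blockD G c * blockE G c = 0 := by
  ext r s
  rw [Matrix.mul_apply, Matrix.zero_apply]
  apply Finset.sum_eq_zero
  intro b _
  by_cases h1 : b.val.toProd.2 = r.val.toProd.1
  · have hb2 : b.val.toProd.2 ≠ c := by rw [h1]; exact r.prop.1
    have hb1 : b.val.toProd.1 = c := b.prop.resolve_right hb2
    have h2 : ¬ s.val.toProd.2 = b.val.toProd.1 := by rw [hb1]; exact s.prop.2
    simp [blockD, blockE, nbMatrix, h2]
  · simp [blockD, blockE, nbMatrix, h1]

lemma blockF_mul_blockF : blockF G c * blockF G c = 0 := by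
  ext r s
  rw [Matrix.mul_apply, Matrix.zero_apply]
  apply Finset.sum_eq_zero
  intro b _
  by_cases h1 : b.val.toProd.2 = r.val.toProd.1
  · by_cases h3 : b.val.toProd.1 = r.val.toProd.2
    · simp [blockF, nbMatrix, h3]
    · -- b.2 = c
      have hb2 : b.val.toProd.2 = c := by
        rcases b.prop with hb | hb
        · rcases r.prop with hr | hr
          · rw [h1, hr]
          · exact absurd (hb.trans hr.symm) h3
        · exact hb
      -- second factor : F b s
      by_cases h4 : s.val.toProd.2 = b.val.toProd.1
      · by_cases h5 : s.val.toProd.1 = b.val.toProd.2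
        · simp [blockF, nbMatrix, h5]
        · -- s.1 ≠ b.2 = c, so s.2 = c hence b.1 = c = b.2, a loop, contradiction
          have hs1 : s.val.toProd.1 ≠ c := fun h => h5 (h.trans hb2.symm)
          have hs2 : s.val.toProd.2 = c := s.prop.resolve_left hs1
          have hb1 : b.val.toProd.1 = c := by rw [← h4, hs2]
          exact absurd (hb1.trans hb2.symm) b.val.adj.ne
      · simp [blockF, nbMatrix, h4]
  · simp [blockF, nbMatrix, h1]

lemma submatrix_nb (t : ℝ) :
    (nbMatrix G - t • 1).submatrix (dartEquiv G c) (dartEquiv G c) =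
      fromBlocks (blockB' G c - t • 1) (blockD G c) (blockE G c) (blockF G c - t • 1) := by
  ext i j
  cases' i with i i <;> cases' j with j j
  · simp [dartEquiv, blockB', Matrix.one_apply, Subtype.ext_iff]
  · have hne : (i.val : G.Dart) ≠ j.val := by
      intro h
      rcases j.prop with h1 | h1
      · exact i.prop.1 (by rw [h]; exact h1)
      · exact i.prop.2 (by rw [h]; exact h1)
    simp [dartEquiv, blockD, Matrix.one_apply, hne]
  · have hne : (i.val : G.Dart) ≠ j.val := by
      intro h
      rcases i.prop with h1 | h1
      · exact j.prop.1 (by rw [← h]; exact h1)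
      · exact j.prop.2 (by rw [← h]; exact h1)
    simp [dartEquiv, blockE, Matrix.one_apply, hne]
  · simp [dartEquiv, blockF, Matrix.one_apply, Subtype.ext_iff]

/-- The darts with first endpoint `c` number `G.degree c`. -/
lemma card_fst_darts : Fintype.card {d : G.Dart // d.toProd.1 = c} = G.degree c := by
  rw [Fintype.card_subtype]
  exact G.dart_fst_fiber_card_eq_degree c

/-- Reversal gives an equivalence between in-darts and out-darts at `c`. -/
def sndFstEquiv : {d : G.Dart // d.toProd.2 = c} ≃ {d : G.Dart // d.toProd.1 = c} where
  toFun d := ⟨d.val.symm, d.prop⟩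
  invFun d := ⟨d.val.symm, d.prop⟩
  left_inv d := Subtype.ext d.val.symm_symm
  right_inv d := Subtype.ext d.val.symm_symm

lemma card_out : Fintype.card {b : IncDart G c // b.val.toProd.1 = c} = G.degree c := by
  rw [← card_fst_darts G c]
  exact Fintype.card_congr
    ⟨fun b => ⟨b.val.val, b.prop⟩, fun d => ⟨⟨d.val, Or.inl d.prop⟩, d.prop⟩,
     fun b => Subtype.ext (Subtype.ext rfl), fun d => Subtype.ext rfl⟩

lemma card_in : Fintype.card {b : IncDart G c // ¬ b.val.toProd.1 = c} = G.degree c := by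
  rw [← card_fst_darts G c]
  apply Fintype.card_congr
  refine Equiv.trans ?_ (sndFstEquiv G c)
  exact
    ⟨fun b => ⟨b.val.val, b.val.prop.resolve_left b.prop⟩,
     fun d => ⟨⟨d.val, Or.inr d.prop⟩, fun h => d.val.adj.ne (h.trans d.prop.symm)⟩,
     fun b => Subtype.ext (Subtype.ext rfl), fun d => Subtype.ext rfl⟩

lemma det_blockF_sub (t : ℝ) : (blockF G c - t • 1).det = t ^ (2 * G.degree c) := by
  classical
  set q : IncDart G c → Prop := fun b => b.val.toProd.1 = c with hq
  let e : {b : IncDart G c // q b} ⊕ {b : IncDart G c // ¬ q b} ≃ IncDart G c :=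
    Equiv.sumCompl q
  rw [← Matrix.det_submatrix_equiv_self e]
  have hsub : (blockF G c - t • 1).submatrix e e =
      fromBlocks ((-t) • 1) (Matrix.of fun r b => blockF G c r.val b.val) 0 ((-t) • 1) := by
    ext i j
    cases' i with i i <;> cases' j with j j
    · -- out × out : F vanishes
      have hF : blockF G c i.val j.val = 0 := by
        by_cases h1 : j.val.val.toProd.2 = i.val.val.toProd.1
        · exact absurd ((j.prop.trans (h1.trans i.prop).symm)) j.val.val.adj.ne
        · simp [blockF, nbMatrix, h1]
      simp [e, Equiv.sumCompl, hF, Matrix.one_apply, Subtype.ext_iff]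
    · have hne : (i.val : IncDart G c) ≠ j.val := fun h => j.prop (by rw [← h]; exact i.prop)
      simp [e, Equiv.sumCompl, Matrix.one_apply, hne]
    · -- in × out : F vanishes
      have hF : blockF G c i.val j.val = 0 := by
        by_cases h1 : j.val.val.toProd.2 = i.val.val.toProd.1
        · have hi2 : i.val.val.toProd.2 = c := i.val.prop.resolve_left i.prop
          have h5 : j.val.val.toProd.1 = i.val.val.toProd.2 := j.prop.trans hi2.symm
          simp [blockF, nbMatrix, h5]
        · simp [blockF, nbMatrix, h1]
      have hne : i.val ≠ j.val := fun h => i.prop (h ▸ j.prop)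
      simp [e, Equiv.sumCompl, hF, Matrix.one_apply, hne]
    · -- in × in : F vanishes since j.2 = c ≠ i.1
      have hF : blockF G c i.val j.val = 0 := by
        have hj2 : j.val.val.toProd.2 = c := j.val.prop.resolve_left j.prop
        have h1 : ¬ j.val.val.toProd.2 = i.val.val.toProd.1 := by
          rw [hj2]; exact fun h => i.prop h.symm
        simp [blockF, nbMatrix, h1]
      simp [e, Equiv.sumCompl, hF, Matrix.one_apply, Subtype.ext_iff]
  rw [hsub, Matrix.det_fromBlocks_zero₂₁, Matrix.det_smul, Matrix.det_smul, Matrix.det_one,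
    Matrix.det_one, card_out, card_in, mul_one, ← pow_add, ← two_mul]
  exact Even.neg_pow (even_two_mul _) t

end Aux

theorem det_ratio_nbMatrix {V : Type*} [Fintype V] [DecidableEq V]
    (G : SimpleGraph V) [DecidableRel G.Adj] (c : V) (t : ℝ) (ht : t ≠ 0)
    (ht' : (blockB' G c - t • 1).det ≠ 0) :
    (nbMatrix G - t • 1).det / (blockB' G c - t • 1).det =
      t ^ (2 * G.degree c) *
        (1 + (t ^ 2)⁻¹ • ((blockB' G c - t • 1)⁻¹ * blockX G c)).det := by
  classical
  have hF2 := blockF_mul_blockF G c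
  have hDE := blockD_mul_blockE G c
  -- the explicit inverse of F - t•1
  have hcross : (blockF G c - t • 1) * (blockF G c + t • 1) = (-(t * t)) • 1 := by
    rw [Matrix.sub_mul, Matrix.mul_add, Matrix.mul_add, hF2, Matrix.mul_smul, Matrix.mul_one,
      Matrix.smul_mul, Matrix.smul_mul, Matrix.one_mul, Matrix.mul_smul, Matrix.mul_one,
      smul_smul]
    module
  have htt : (-(t * t) : ℝ) ≠ 0 := by
    simp [mul_ne_zero ht ht]
  have hFinv : (blockF G c - t • 1) * ((-(t * t))⁻¹ • (blockF G c + t • 1)) = 1 := by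
    rw [Matrix.mul_smul, hcross, smul_smul, inv_mul_cancel₀ htt, one_smul]
  haveI : Invertible (blockF G c - t • 1) := invertibleOfRightInverse _ _ hFinv
  have hdet : (nbMatrix G - t • 1).det =
      t ^ (2 * G.degree c) * ((blockB' G c - t • 1) + (t ^ 2)⁻¹ • blockX G c).det := by
    rw [← Matrix.det_submatrix_equiv_self (dartEquiv G c), submatrix_nb,
      Matrix.det_fromBlocks₂₂, det_blockF_sub]
    congr 2
    rw [invOf_eq_right_inv hFinv]
    rw [Matrix.mul_smul, Matrix.smul_mul, Matrix.mul_add, Matrix.mul_smul, Matrix.mul_one,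
      Matrix.add_mul, Matrix.smul_mul, blockD_mul_blockE, smul_zero, add_zero]
    have : ((-(t * t))⁻¹ : ℝ) • (blockD G c * blockF G c * blockE G c) =
        (-(t ^ 2)⁻¹) • blockX G c := by
      rw [blockX]
      congr 1
      rw [pow_two]
      field_simp
    rw [this, neg_smul, sub_neg_eq_add]
  have hA : IsUnit (blockB' G c - t • 1).det := isUnit_iff_ne_zero.mpr ht'
  have hinv : (blockB' G c - t • 1)⁻¹ * (blockB' G c - t • 1) = 1 :=
    Matrix.nonsing_inv_mul _ hA
  have key : (1 : Matrix (NonIncDart G c) (NonIncDart G c) ℝ) +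
      (t ^ 2)⁻¹ • ((blockB' G c - t • 1)⁻¹ * blockX G c) =
      (blockB' G c - t • 1)⁻¹ * ((blockB' G c - t • 1) + (t ^ 2)⁻¹ • blockX G c) := by
    rw [Matrix.mul_add, hinv, Matrix.mul_smul]
  rw [hdet, key, Matrix.det_mul, Matrix.det_nonsing_inv, Ring.inverse_eq_inv']
  field_simp
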